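/- Let P > 3 be an integer and define g(x) = (1 − x)² + (P − 1)·x·(1 − x + log x) for x ∈ (0,1), with derivative g′(x) = (4 − 2P)(x − 1) + (P − 1)·log x and second derivative g″(x) = 4 − 2P + (P − 1)/x. Let x_m = (P − 1)/(2(P − 2)). Then g″(x) > 0 for x ∈ (0, x_m), g″(x) < 0 for x ∈ (x_m, 1), g′(x_m) > 0, and there exists a unique x₀ ∈ (0, x_m) such that g′(x) < 0 for all x ∈ (0, x₀) and g′(x) > 0 for all x ∈ (x₀, 1). -/

import Mathlib

private lemma deo_aux_hasDerivAt_g (p x : ℝ) (hx : 0 < x) :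
    HasDerivAt (fun x => (1 - x) ^ 2 + (p - 1) * x * (1 - x + Real.log x))
      ((4 - 2 * p) * (x - 1) + (p - 1) * Real.log x) x := by
  have h1 : HasDerivAt (fun x : ℝ => (1 - x) ^ 2)
      (2 * (1 - x) ^ 1 * (-1)) x := ((hasDerivAt_id x).const_sub 1).pow 2
  have h2 : HasDerivAt (fun x : ℝ => x * (1 - x + Real.log x))
      (1 * (1 - x + Real.log x) + x * (-1 + x⁻¹)) x :=
    (hasDerivAt_id x).mul
      (((hasDerivAt_id x).const_sub 1).add (Real.hasDerivAt_log hx.ne'))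
  have h2' := h2.const_mul (p - 1)
  simp only [← mul_assoc] at h2'
  have h := h1.add h2'
  have hxinv : x * x⁻¹ = 1 := mul_inv_cancel₀ hx.ne'
  refine h.congr_deriv ?_
  linear_combination (p - 1) * hxinv

private lemma deo_aux_hasDerivAt_g' (p x : ℝ) (hx : 0 < x) :
    HasDerivAt (fun x => (4 - 2 * p) * (x - 1) + (p - 1) * Real.log x)
      (4 - 2 * p + (p - 1) / x) x := by
  have h1 : HasDerivAt (fun x : ℝ => (4 - 2 * p) * (x - 1))
      ((4 - 2 * p) * 1) x := ((hasDerivAt_id x).sub_const 1).const_mul _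
  have h2 : HasDerivAt (fun x : ℝ => (p - 1) * Real.log x)
      ((p - 1) * x⁻¹) x := (Real.hasDerivAt_log hx.ne').const_mul _
  refine (h1.add h2).congr_deriv ?_
  ring

theorem deo_g_deriv_analysis (P : ℕ) (hP : 3 < P) :
    let g : ℝ → ℝ := fun x => (1 - x) ^ 2 + ((P : ℝ) - 1) * x * (1 - x + Real.log x)
    let g' : ℝ → ℝ := fun x => (4 - 2 * (P : ℝ)) * (x - 1) + ((P : ℝ) - 1) * Real.log x
    let g'' : ℝ → ℝ := fun x => 4 - 2 * (P : ℝ) + ((P : ℝ) - 1) / x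
    let xm : ℝ := ((P : ℝ) - 1) / (2 * ((P : ℝ) - 2))
    (∀ x ∈ Set.Ioo (0 : ℝ) 1, HasDerivAt g (g' x) x) ∧
      (∀ x ∈ Set.Ioo (0 : ℝ) 1, HasDerivAt g' (g'' x) x) ∧
      (∀ x ∈ Set.Ioo (0 : ℝ) xm, g'' x > 0) ∧
      (∀ x ∈ Set.Ioo xm (1 : ℝ), g'' x < 0) ∧
      g' xm > 0 ∧
      (∃! x₀, x₀ ∈ Set.Ioo (0 : ℝ) xm ∧
        (∀ x ∈ Set.Ioo (0 : ℝ) x₀, g' x < 0) ∧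
        (∀ x ∈ Set.Ioo x₀ (1 : ℝ), g' x > 0)) := by
  intro g g' g'' xm
  set p : ℝ := (P : ℝ) with hp_def
  have hp4 : (4 : ℝ) ≤ p := by
    rw [hp_def]
    exact_mod_cast hP
  have hp2 : (0 : ℝ) < 2 * (p - 2) := by linarith
  have hxm_eq : xm * (2 * (p - 2)) = p - 1 := by
    show ((p - 1) / (2 * (p - 2))) * (2 * (p - 2)) = p - 1
    exact div_mul_cancel₀ _ hp2.ne'
  have hxm0 : 0 < xm := by
    have : 0 < (p - 1) / (2 * (p - 2)) := div_pos (by linarith) hp2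
    exact this
  have hxm1 : xm < 1 := by nlinarith [hxm_eq]
  have hxmhalf : (1:ℝ)/2 < xm := by nlinarith [hxm_eq]
  -- second derivative sign
  have h3 : ∀ x ∈ Set.Ioo (0 : ℝ) xm, g'' x > 0 := by
    intro x hx
    have hmul : x * (2 * (p - 2)) < p - 1 := by nlinarith [hx.2, hxm_eq, hx.1]
    have : 2 * p - 4 < (p - 1) / x := by
      rw [lt_div_iff₀ hx.1]; nlinarith
    show 0 < 4 - 2 * p + (p - 1) / x
    linarith
  have h4 : ∀ x ∈ Set.Ioo xm (1 : ℝ), g'' x < 0 := by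
    intro x hx
    have hx0 : 0 < x := lt_trans hxm0 hx.1
    have hmul : p - 1 < x * (2 * (p - 2)) := by nlinarith [hx.1, hxm_eq]
    have : (p - 1) / x < 2 * p - 4 := by
      rw [div_lt_iff₀ hx0]; nlinarith
    show 4 - 2 * p + (p - 1) / x < 0
    linarith
  -- g'(xm) > 0
  have hloginv : Real.log xm > 1 - 1 / xm := by
    have h := Real.log_lt_sub_one_of_pos (inv_pos.mpr hxm0) (by
      intro h
      have : xm = 1 := by
        field_simp at h; linarith
      linarith)
    rw [Real.log_inv] at h
    have : 1 / xm = xm⁻¹ := one_div xm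
    linarith [h, this ▸ h]
  have hinv : xm * (1 / xm) = 1 := by field_simp
  have h5 : g' xm > 0 := by
    show 0 < (4 - 2 * p) * (xm - 1) + (p - 1) * Real.log xm
    have h1 : (p - 1) * Real.log xm > (p - 1) * (1 - 1 / xm) :=
      mul_lt_mul_of_pos_left hloginv (by linarith)
    nlinarith [hxm_eq, hinv, hxm0]
  -- g' 1 = 0
  have hg'1 : g' 1 = 0 := by
    show (4 - 2 * p) * (1 - 1) + (p - 1) * Real.log 1 = 0
    simp
  have hderiv' : ∀ x : ℝ, 0 < x → HasDerivAt g' (g'' x) x := fun x hx =>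
    deo_aux_hasDerivAt_g' p x hx
  -- strict monotonicity
  have hmono : StrictMonoOn g' (Set.Ioc 0 xm) := by
    apply strictMonoOn_of_deriv_pos (convex_Ioc 0 xm)
    · exact fun x hx => ((hderiv' x hx.1).continuousAt).continuousWithinAt
    · intro x hx
      rw [interior_Ioc] at hx
      rw [(hderiv' x hx.1).deriv]
      exact h3 x hx
  have hanti : StrictAntiOn g' (Set.Icc xm 1) := by
    apply strictAntiOn_of_deriv_neg (convex_Icc xm 1)
    · exact fun x hx => ((hderiv' x (lt_of_lt_of_le hxm0 hx.1)).continuousAt).continuousWithinAt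
    · intro x hx
      rw [interior_Icc] at hx
      rw [(hderiv' x (lt_trans hxm0 hx.1)).deriv]
      exact h4 x hx
  -- find the root
  obtain ⟨x₀, hx₀mem, hx₀sgn⟩ : ∃ x₀ ∈ Set.Ioo (0:ℝ) xm, g' x₀ = 0 := by
    set a : ℝ := Real.exp (-(2 * p)) with ha_def
    have ha0 : 0 < a := Real.exp_pos _
    have ha1 : a < 1 := Real.exp_lt_one_iff.mpr (by linarith)
    have haxm : a < xm := by
      have h1 : 2 * p + 1 ≤ Real.exp (2 * p) := by
        have := Real.add_one_le_exp (2 * p); linarith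
      have h2 : a * Real.exp (2 * p) = 1 := by
        rw [ha_def, ← Real.exp_add]; simp
      nlinarith [hxmhalf, ha0]
    have hga : g' a < 0 := by
      show (4 - 2 * p) * (a - 1) + (p - 1) * Real.log a < 0
      rw [ha_def, Real.log_exp]
      nlinarith [ha0, ha1]
    have hcont : ContinuousOn g' (Set.Icc a xm) :=
      fun x hx => ((hderiv' x (lt_of_lt_of_le ha0 hx.1)).continuousAt).continuousWithinAt
    have hivt := intermediate_value_Icc (le_of_lt haxm) hcont
    have h0mem : (0:ℝ) ∈ Set.Icc (g' a) (g' xm) := ⟨le_of_lt hga, le_of_lt h5⟩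
    obtain ⟨x₀, hx₀, hgx₀⟩ := hivt h0mem
    refine ⟨x₀, ⟨lt_of_lt_of_le ha0 hx₀.1, ?_⟩, hgx₀⟩
    rcases lt_or_eq_of_le hx₀.2 with h | h
    · exact h
    · exfalso; rw [h] at hgx₀; linarith [hgx₀ ▸ h5]
  refine ⟨fun x hx => deo_aux_hasDerivAt_g p x hx.1,
    fun x hx => deo_aux_hasDerivAt_g' p x hx.1, h3, h4, h5, ?_⟩
  refine ⟨x₀, ⟨hx₀mem, ?_, ?_⟩, ?_⟩
  · -- negative before x₀
    intro x hx
    have h := hmono (Set.mem_Ioc.mpr ⟨hx.1, le_of_lt (lt_of_lt_of_le hx.2 (le_of_lt hx₀mem.2))⟩)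
      (Set.mem_Ioc.mpr ⟨hx₀mem.1, le_of_lt hx₀mem.2⟩) hx.2
    linarith [hx₀sgn ▸ h]
  · -- positive after x₀
    intro x hx
    rcases le_or_gt x xm with hcase | hcase
    · have h := hmono (Set.mem_Ioc.mpr ⟨hx₀mem.1, le_of_lt hx₀mem.2⟩)
        (Set.mem_Ioc.mpr ⟨lt_trans hx₀mem.1 hx.1, hcase⟩) hx.1
      linarith [hx₀sgn ▸ h]
    · have h := hanti (Set.mem_Icc.mpr ⟨le_of_lt hcase, le_of_lt hx.2⟩)
        (Set.mem_Icc.mpr ⟨le_of_lt hxm1, le_refl 1⟩) hx.2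
      linarith [hg'1 ▸ h]
  · -- uniqueness
    rintro y ⟨hymem, hyneg, hypos⟩
    by_contra hne
    rcases lt_or_gt_of_ne hne with hlt | hgt
    · -- y < x₀
      set m := (y + x₀) / 2
      have hm1 : y < m := by simp only [m]; linarith
      have hm2 : m < x₀ := by simp only [m]; linarith
      have hpos := hypos m ⟨hm1, by linarith [hx₀mem.2, hxm1]⟩
      have hneg := hx₀sgn ▸ (hmono
        (Set.mem_Ioc.mpr ⟨lt_trans hymem.1 hm1, le_of_lt (lt_trans hm2 hx₀mem.2)⟩)
        (Set.mem_Ioc.mpr ⟨hx₀mem.1, le_of_lt hx₀mem.2⟩) hm2)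
      linarith
    · -- x₀ < y
      set m := (x₀ + y) / 2
      have hm1 : x₀ < m := by simp only [m]; linarith
      have hm2 : m < y := by simp only [m]; linarith
      have hneg := hyneg m ⟨lt_trans hx₀mem.1 hm1, hm2⟩
      have hpos := hx₀sgn ▸ (hmono
        (Set.mem_Ioc.mpr ⟨hx₀mem.1, le_of_lt hx₀mem.2⟩)
        (Set.mem_Ioc.mpr ⟨lt_trans hx₀mem.1 hm1, le_of_lt (lt_trans hm2 hymem.2)⟩) hm1)
      linarith
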